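/- arXiv:1310.6019 — 7 statements merged into one kernel-verified Lean document; each statement's English description precedes it below -/
import Mathlib

section
/- Let p, m, i_p, i_e be natural numbers with i_e ≤ i_p ≤ p, i_e ≤ m, m − i_e ≤ p − i_p, and i_e > 0. Then S(p, m, i_p − 1, i_e) < S(p, m, i_p, i_e). -/
lemma key (a q : ℕ) : ∀ d e : ℕ,
    ∑ j ∈ Finset.range (d+1), (a+1).choose (e+1+j) * q.choose (d-j)
    = (∑ j ∈ Finset.range (d+1), a.choose (e+1+j) * (q+1).choose (d-j))
      + a.choose e * q.choose d := by
  intro d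
  induction d with
  | zero => intro e; simp [Nat.choose_succ_succ]; ring
  | succ d ih =>
    intro e
    rw [Finset.sum_range_succ' (fun j => (a+1).choose (e+1+j) * q.choose (d+1-j)),
        Finset.sum_range_succ' (fun j => a.choose (e+1+j) * (q+1).choose (d+1-j))]
    have c1 : ∑ j ∈ Finset.range (d+1), (a+1).choose (e+1+(j+1)) * q.choose (d+1-(j+1))
        = ∑ j ∈ Finset.range (d+1), (a+1).choose (e+1+1+j) * q.choose (d-j) :=
      Finset.sum_congr rfl fun j _ => by
        rw [show e+1+(j+1) = e+1+1+j by ring, show d+1-(j+1) = d-j by omega]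
    have c2 : ∑ j ∈ Finset.range (d+1), a.choose (e+1+(j+1)) * (q+1).choose (d+1-(j+1))
        = ∑ j ∈ Finset.range (d+1), a.choose (e+1+1+j) * (q+1).choose (d-j) :=
      Finset.sum_congr rfl fun j _ => by
        rw [show e+1+(j+1) = e+1+1+j by ring, show d+1-(j+1) = d-j by omega]
    rw [c1, c2, ih (e+1)]
    simp only [Nat.choose_succ_succ a e, Nat.choose_succ_succ q d, Nat.add_sub_cancel,
      Nat.sub_zero]
    ring

lemma key2 (a q e m : ℕ) (h : e + 1 ≤ m) :
    ∑ i ∈ Finset.Icc (e+1) m, (a+1).choose i * q.choose (m-i)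
    = (∑ i ∈ Finset.Icc (e+1) m, a.choose i * (q+1).choose (m-i))
      + a.choose e * q.choose (m-(e+1)) := by
  obtain ⟨d, rfl⟩ : ∃ d, m = e + 1 + d := ⟨m - (e+1), by omega⟩
  rw [← Finset.Ico_add_one_right_eq_Icc, Finset.sum_Ico_eq_sum_range, Finset.sum_Ico_eq_sum_range]
  have hn : e + 1 + d + 1 - (e + 1) = d + 1 := by omega
  rw [hn]
  have c1 : ∑ j ∈ Finset.range (d+1), (a+1).choose (e+1+j) * q.choose (e+1+d-(e+1+j))
      = ∑ j ∈ Finset.range (d+1), (a+1).choose (e+1+j) * q.choose (d-j) :=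
    Finset.sum_congr rfl fun j _ => by rw [show e+1+d-(e+1+j) = d-j by omega]
  have c2 : ∑ j ∈ Finset.range (d+1), a.choose (e+1+j) * (q+1).choose (e+1+d-(e+1+j))
      = ∑ j ∈ Finset.range (d+1), a.choose (e+1+j) * (q+1).choose (d-j) :=
    Finset.sum_congr rfl fun j _ => by rw [show e+1+d-(e+1+j) = d-j by omega]
  rw [c1, c2, show e+1+d-(e+1) = d by omega]
  exact key a q d e

/-- The surprise value `S(p, m, i_p, i_e)`. -/
def surpriseVal (p m ip ie : ℕ) : ℚ :=
  (∑ i ∈ Finset.Icc ie m, (ip.choose i * (p - ip).choose (m - i) : ℚ)) / (p.choose m)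

theorem stmt1 (p m ip ie : ℕ) (h1 : ie ≤ ip) (h2 : ip ≤ p) (h3 : ie ≤ m)
    (h4 : m - ie ≤ p - ip) (h5 : 0 < ie) :
    surpriseVal p m (ip - 1) ie < surpriseVal p m ip ie := by
  have hpm : 0 < p.choose m := Nat.choose_pos (by omega)
  rw [surpriseVal, surpriseVal, div_lt_div_iff_of_pos_right (by exact_mod_cast hpm)]
  have cast1 : ∀ b c : ℕ, (∑ i ∈ Finset.Icc ie m, ((b.choose i : ℚ) * c.choose (m - i)))
      = ((∑ i ∈ Finset.Icc ie m, b.choose i * c.choose (m - i) : ℕ) : ℚ) := by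
    intro b c; push_cast; rfl
  rw [cast1, cast1, Nat.cast_lt]
  obtain ⟨e, rfl⟩ : ∃ e, ie = e + 1 := ⟨ie - 1, by omega⟩
  obtain ⟨a, rfl⟩ : ∃ a, ip = a + 1 := ⟨ip - 1, by omega⟩
  simp only [Nat.add_sub_cancel]
  rw [show p - a = (p - (a+1)) + 1 by omega, key2 a (p - (a+1)) e m (by omega)]
  have : 0 < a.choose e * (p - (a+1)).choose (m - (e+1)) :=
    Nat.mul_pos (Nat.choose_pos (by omega)) (Nat.choose_pos (by omega))
  omega
end

section
/- Let p, m, i_p, i_e be natural numbers with i_e ≤ i_p ≤ p, i_e ≤ m, m − i_e ≤ p − i_p, and p − i_p > m − i_e. Then S(p, m, i_p + 1, i_e + 1) < S(p, m, i_p, i_e). -/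
lemma key_surprise (ip q : ℕ) : ∀ d ie m : ℕ, ie + d = m →
    ∑ i ∈ Finset.Icc ie m, ip.choose i * (q + 1).choose (m - i)
      = (∑ i ∈ Finset.Icc (ie + 1) m, (ip + 1).choose i * q.choose (m - i))
        + ip.choose ie * q.choose (m - ie) := by
  intro d
  induction d with
  | zero =>
    intro ie m h
    subst h
    rw [Finset.Icc_eq_empty (by omega : ¬ ie + 1 ≤ ie + 0)]
    simp
  | succ d ih =>
    intro ie m h
    have hlt : ie < m := by omega
    have e1 : ∑ i ∈ Finset.Icc ie m, ip.choose i * (q + 1).choose (m - i)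
        = ip.choose ie * (q + 1).choose (m - ie)
          + ∑ i ∈ Finset.Icc (ie + 1) m, ip.choose i * (q + 1).choose (m - i) := by
      rw [← Finset.Ico_add_one_right_eq_Icc, ← Finset.Ico_add_one_right_eq_Icc (ie + 1),
        Finset.sum_eq_sum_Ico_succ_bot (by omega)]
    have e2 : ∑ i ∈ Finset.Icc (ie + 1) m, (ip + 1).choose i * q.choose (m - i)
        = (ip + 1).choose (ie + 1) * q.choose (m - (ie + 1))
          + ∑ i ∈ Finset.Icc (ie + 2) m, (ip + 1).choose i * q.choose (m - i) := by
      rw [← Finset.Ico_add_one_right_eq_Icc, ← Finset.Ico_add_one_right_eq_Icc (ie + 2),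
        Finset.sum_eq_sum_Ico_succ_bot (by omega)]
    rw [e1, e2, ih (ie + 1) m (by omega)]
    have hm1 : m - ie = d + 1 := by omega
    have hm2 : m - (ie + 1) = d := by omega
    rw [hm1, hm2, Nat.choose_succ_succ q d, Nat.choose_succ_succ ip ie]
    ring

theorem stmt2 (p m ip ie : ℕ) (h1 : ie ≤ ip) (h2 : ip ≤ p) (h3 : ie ≤ m)
    (h4 : m - ie ≤ p - ip) (h5 : m - ie < p - ip) :
    surpriseVal p m (ip + 1) (ie + 1) < surpriseVal p m ip ie := by
  have hq : p - ip = (p - ip - 1) + 1 := by omega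
  set q := p - ip - 1 with hqdef
  have hpq : p - (ip + 1) = q := by omega
  have hmp : m ≤ p := by omega
  have hden : (0 : ℚ) < p.choose m := by
    exact_mod_cast Nat.choose_pos hmp
  have hkey := key_surprise ip q (m - ie) ie m (by omega)
  have hpos : 0 < ip.choose ie * q.choose (m - ie) :=
    Nat.mul_pos (Nat.choose_pos h1) (Nat.choose_pos (by omega))
  have hnat : (∑ i ∈ Finset.Icc (ie + 1) m, (ip + 1).choose i * q.choose (m - i))
      < ∑ i ∈ Finset.Icc ie m, ip.choose i * (q + 1).choose (m - i) := by omega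
  unfold surpriseVal
  rw [div_lt_div_iff_of_pos_right hden, hpq, hq]
  exact_mod_cast hnat
end

section
/- Let p, m, i_p, i_e, j be natural numbers with i_e ≤ i_p, j ≥ 1, i_e + j ≤ m, and p − i_p > m − i_e. Then S(p, m, i_p + j, i_e + j) < S(p, m, i_p, i_e). (This follows by repeated application of the one-step statement that if p − i_p > m − i_e then S(p, m, i_p + 1, i_e + 1) < S(p, m, i_p, i_e), since the condition p − i_p > m − i_e is preserved when both i_p and i_e increase by 1.) -/
lemma sum_key (n : ℕ) : ∀ a b m ie : ℕ, ie + n = m →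
    ∑ i ∈ Finset.Icc ie m, a.choose i * (b + 1).choose (m - i)
      = (∑ i ∈ Finset.Icc (ie + 1) m, (a + 1).choose i * b.choose (m - i))
        + a.choose ie * b.choose (m - ie) := by
  induction n with
  | zero =>
    intro a b m ie h
    subst h
    simp
  | succ n ih =>
    intro a b m ie h
    have hle : ie ≤ m := by omega
    have hle1 : ie + 1 ≤ m := by omega
    have hsplit : ∀ (f : ℕ → ℕ), ∑ i ∈ Finset.Icc ie m, f i
        = f ie + ∑ i ∈ Finset.Icc (ie + 1) m, f i := by
      intro f
      rw [Finset.Icc_eq_cons_Ioc hle, Finset.sum_cons, ← Finset.Icc_add_one_left_eq_Ioc]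
    have hsplit2 : ∀ (f : ℕ → ℕ), ∑ i ∈ Finset.Icc (ie + 1) m, f i
        = f (ie + 1) + ∑ i ∈ Finset.Icc (ie + 2) m, f i := by
      intro f
      rw [Finset.Icc_eq_cons_Ioc hle1, Finset.sum_cons, ← Finset.Icc_add_one_left_eq_Ioc]
      rfl
    rw [hsplit, ih a b m (ie + 1) (by omega), hsplit2]
    have hk : m - ie = (m - (ie + 1)) + 1 := by omega
    rw [hk]
    rw [Nat.choose_succ_succ (b) (m - (ie + 1)), Nat.choose_succ_succ a ie]
    ring

lemma step_lemma (p m ip ie : ℕ) (h1 : ie ≤ ip) (hm : ie + 1 ≤ m)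
    (h4 : m - ie < p - ip) :
    surpriseVal p m (ip + 1) (ie + 1) < surpriseVal p m ip ie := by
  have hip : ip < p := by omega
  obtain ⟨b, hb⟩ : ∃ b, p - ip = b + 1 := ⟨p - ip - 1, by omega⟩
  have hb2 : p - (ip + 1) = b := by omega
  have hkey := sum_key (m - ie) ip b m ie (by omega)
  have hpos1 : 0 < ip.choose ie := Nat.choose_pos h1
  have hpos2 : 0 < b.choose (m - ie) := Nat.choose_pos (by omega)
  have hnum : (∑ i ∈ Finset.Icc (ie + 1) m, (ip + 1).choose i * b.choose (m - i))
      < ∑ i ∈ Finset.Icc ie m, ip.choose i * (b + 1).choose (m - i) := by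
    rw [hkey]
    have := Nat.mul_pos hpos1 hpos2
    omega
  have hdenom : (0 : ℚ) < p.choose m := by
    exact_mod_cast Nat.choose_pos (by omega : m ≤ p)
  unfold surpriseVal
  rw [hb, hb2]
  apply div_lt_div_of_pos_right _ hdenom
  have : ((∑ i ∈ Finset.Icc (ie + 1) m, (ip + 1).choose i * b.choose (m - i) : ℕ) : ℚ)
      < ((∑ i ∈ Finset.Icc ie m, ip.choose i * (b + 1).choose (m - i) : ℕ) : ℚ) := by
    exact_mod_cast hnum
  push_cast at this
  convert this using 2

theorem stmt3 (p m ip ie j : ℕ) (h1 : ie ≤ ip) (h2 : 1 ≤ j) (h3 : ie + j ≤ m)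
    (h4 : m - ie < p - ip) :
    surpriseVal p m (ip + j) (ie + j) < surpriseVal p m ip ie := by
  induction j generalizing ip ie with
  | zero => omega
  | succ n ih =>
    rcases Nat.eq_zero_or_pos n with hn | hn
    · subst hn
      exact step_lemma p m ip ie h1 (by omega) h4
    · have hstep := step_lemma p m ip ie h1 (by omega) h4
      have hrec := ih (ip + 1) (ie + 1) (by omega) hn (by omega) (by omega)
      calc surpriseVal p m (ip + (n + 1)) (ie + (n + 1))
          = surpriseVal p m ((ip + 1) + n) ((ie + 1) + n) := by ring_nf
        _ < surpriseVal p m (ip + 1) (ie + 1) := hrec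
        _ < surpriseVal p m ip ie := hstep
end

section
/- Let G be a finite simple graph that has at least one edge and is not a complete graph, and let ζ be a surprise-optimal clustering of G. Then ζ is Pareto-optimal with respect to maximizing the number of intracluster edges and minimizing the number of intracluster vertex pairs: every clustering ζ' of G with i_e(ζ') ≥ i_e(ζ) and i_p(ζ') ≤ i_p(ζ) satisfies i_e(ζ') = i_e(ζ) and i_p(ζ') = i_p(ζ). -/
open Finset

/- ### Auxiliary numeric lemmas about the tail sum -/

/-- The (natural number) numerator of the surprise value, with `q = p - ip`. -/
def Tn (m k q t : ℕ) : ℕ := ∑ i ∈ Icc t m, k.choose i * q.choose (m - i)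

lemma Tn_zero (m k q : ℕ) : Tn m k q 0 = (k + q).choose m := by
  rw [Nat.add_choose_eq, Finset.Nat.sum_antidiagonal_eq_sum_range_succ_mk]
  unfold Tn
  rw [show Icc 0 m = range (m+1) by ext i; simp [Nat.lt_succ_iff]]

lemma Tn_of_gt {m t : ℕ} (k q : ℕ) (h : m < t) : Tn m k q t = 0 := by
  unfold Tn
  rw [Finset.Icc_eq_empty (by omega)]
  simp

lemma Tn_peel {m t : ℕ} (k q : ℕ) (h : t ≤ m) :
    Tn m k q t = k.choose t * q.choose (m - t) + Tn m k q (t + 1) := by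
  unfold Tn
  rw [← Finset.insert_Icc_add_one_left_eq_Icc h, Finset.sum_insert (by simp)]

lemma Tn_anti {m t t' : ℕ} (k q : ℕ) (h : t ≤ t') : Tn m k q t' ≤ Tn m k q t :=
  Finset.sum_le_sum_of_subset (Finset.Icc_subset_Icc_left h)

lemma Tn_succ_eq {m s : ℕ} (k q : ℕ) (h : s + 1 ≤ m) :
    Tn m (k + 1) q (s + 1) = Tn m k (q + 1) (s + 1) + k.choose s * q.choose (m - (s + 1)) := by
  obtain ⟨d, hd⟩ : ∃ d, m = s + 1 + d := ⟨m - (s+1), by omega⟩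
  subst hd
  clear h
  induction d generalizing s with
  | zero =>
    simp only [Nat.add_zero]
    rw [Tn_peel _ _ le_rfl, Tn_peel _ _ le_rfl, Tn_of_gt _ _ (by omega), Tn_of_gt _ _ (by omega)]
    simp [Nat.choose_succ_succ]
    ring
  | succ d ih =>
    have h1 : s + 1 ≤ s + 1 + (d + 1) := by omega
    rw [Tn_peel (k+1) q h1, Tn_peel k (q+1) h1]
    have h2 : s + 1 + (d + 1) = (s + 1) + 1 + d := by omega
    rw [h2] at *
    rw [ih (s := s+1)]
    have e1 : s + 1 + 1 + d - (s + 1) = d + 1 := by omega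
    have e2 : s + 1 + 1 + d - (s + 1 + 1) = d := by omega
    rw [e1, e2]
    rw [Nat.choose_succ_succ (k) (s),
      show (q+1).choose (d+1) = q.choose d + q.choose (d+1) from Nat.choose_succ_succ q d]
    ring

lemma Tn_step_le (m k q t : ℕ) : Tn m k (q + 1) t ≤ Tn m (k + 1) q t := by
  match t with
  | 0 => rw [Tn_zero, Tn_zero, show k + (q+1) = k + 1 + q by omega]
  | s + 1 =>
    by_cases h : s + 1 ≤ m
    · rw [Tn_succ_eq k q h]; omega
    · rw [Tn_of_gt, Tn_of_gt] <;> omega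

lemma Tn_mono_k (m q t : ℕ) : ∀ j k, Tn m k (q + j) t ≤ Tn m (k + j) q t := by
  intro j
  induction j with
  | zero => simp
  | succ j ih =>
    intro k
    calc Tn m k (q + (j+1)) t = Tn m k (q + j + 1) t := by ring_nf
    _ ≤ Tn m (k+1) (q+j) t := Tn_step_le _ _ _ _
    _ ≤ Tn m (k + 1 + j) q t := ih (k+1)
    _ = Tn m (k + (j+1)) q t := by ring_nf

variable {V : Type*} [Fintype V] [DecidableEq V]

open scoped Classical in
/-- The number of edges of `G`. -/
noncomputable def numEdges (G : SimpleGraph V) : ℕ := G.edgeFinset.card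

open scoped Classical in
/-- The number of intracluster edges of the clustering `ζ`, i.e. of edges of `G`
having both endpoints in the same cluster. -/
noncomputable def intraEdges (G : SimpleGraph V) (ζ : Finpartition (univ : Finset V)) : ℕ :=
  (G.edgeFinset.filter fun e => ∃ P ∈ ζ.parts, ∀ v ∈ e, v ∈ P).card

open scoped Classical in
/-- The number of intercluster edges of the clustering `ζ`, i.e. of edges of `G`
whose endpoints lie in different clusters. -/
noncomputable def interEdges (G : SimpleGraph V) (ζ : Finpartition (univ : Finset V)) : ℕ :=
  (G.edgeFinset.filter fun e => ¬ ∃ P ∈ ζ.parts, ∀ v ∈ e, v ∈ P).card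

/-- The number of intracluster vertex pairs of the clustering `ζ`. -/
def intraPairs (ζ : Finpartition (univ : Finset V)) : ℕ :=
  ∑ P ∈ ζ.parts, (P.card).choose 2

/-- The surprise of the clustering `ζ` of the graph `G`. -/
noncomputable def surprise (G : SimpleGraph V) (ζ : Finpartition (univ : Finset V)) : ℚ :=
  surpriseVal ((Fintype.card V).choose 2) (numEdges G) (intraPairs ζ) (intraEdges G ζ)

/- ### Auxiliary combinatorial lemmas -/

open scoped Classical

lemma sym2_filter_card (P : Finset V) :
    (univ.filter fun e : Sym2 V => ¬ e.IsDiag ∧ ∀ v ∈ e, v ∈ P).card = P.card.choose 2 := by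
  have key : ∀ a b : V, (univ.filter (· ∈ s(a,b)) : Finset V) = {a, b} := by
    intro a b; ext x; simp [Sym2.mem_iff]
  rw [← Finset.card_powersetCard 2 P]
  apply Finset.card_bij (fun e _ => univ.filter (· ∈ e))
  · intro e he
    simp only [mem_filter, mem_univ, true_and] at he
    obtain ⟨hd, hmem⟩ := he
    induction e using Sym2.ind with | _ a b =>
    rw [Sym2.mk_isDiag_iff] at hd
    rw [Finset.mem_powersetCard]
    refine ⟨fun x hx => ?_, ?_⟩
    · simp only [mem_filter] at hx; exact hmem x hx.2
    · rw [key, Finset.card_pair hd]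
  · intro e1 h1 e2 h2 heq
    simp only [mem_filter, mem_univ, true_and] at h1 h2
    induction e1 using Sym2.ind with | _ a b =>
    induction e2 using Sym2.ind with | _ c d =>
    rw [key, key] at heq
    rw [Sym2.mk_isDiag_iff] at h1 h2
    have ha : a ∈ ({c, d} : Finset V) := heq ▸ (by simp)
    have hb : b ∈ ({c, d} : Finset V) := heq ▸ (by simp)
    simp only [Finset.mem_insert, Finset.mem_singleton] at ha hb
    rw [Sym2.eq_iff]
    rcases ha with rfl | rfl <;> rcases hb with rfl | rfl <;> tauto
  · intro t ht
    rw [Finset.mem_powersetCard] at ht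
    obtain ⟨a, b, hab, rfl⟩ := Finset.card_eq_two.mp ht.2
    refine ⟨s(a,b), ?_, key a b⟩
    simp only [mem_filter, mem_univ, true_and, Sym2.mk_isDiag_iff]
    refine ⟨hab, fun v hv => ?_⟩
    rw [Sym2.mem_iff] at hv
    apply ht.1
    rcases hv with rfl | rfl <;> simp

lemma cardA (ζ : Finpartition (univ : Finset V)) :
    (univ.filter fun e : Sym2 V => ¬ e.IsDiag ∧ ∃ P ∈ ζ.parts, ∀ v ∈ e, v ∈ P).card
      = intraPairs ζ := by
  rw [intraPairs]
  rw [show (univ.filter fun e : Sym2 V => ¬ e.IsDiag ∧ ∃ P ∈ ζ.parts, ∀ v ∈ e, v ∈ P)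
      = ζ.parts.biUnion (fun P => univ.filter fun e : Sym2 V => ¬ e.IsDiag ∧ ∀ v ∈ e, v ∈ P) by
    ext e; simp only [mem_filter, mem_biUnion, mem_univ, true_and]; tauto]
  rw [Finset.card_biUnion]
  · exact Finset.sum_congr rfl fun P _ => sym2_filter_card P
  · intro P hP Q hQ hne
    rw [Function.onFun, Finset.disjoint_left]
    intro e heP heQ
    simp only [mem_filter, mem_univ, true_and] at heP heQ
    induction e using Sym2.ind with | _ a b =>
    exact hne (ζ.eq_of_mem_parts hP hQ (heP.2 a (Sym2.mem_mk_left a b))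
      (heQ.2 a (Sym2.mem_mk_left a b)))

lemma cardD : (univ.filter fun e : Sym2 V => ¬ e.IsDiag).card = (Fintype.card V).choose 2 := by
  rw [← Sym2.card_subtype_not_diag, Fintype.card_subtype]

lemma intra_facts (G : SimpleGraph V) (ζ : Finpartition (univ : Finset V)) :
    intraEdges G ζ ≤ intraPairs ζ ∧ intraPairs ζ ≤ (Fintype.card V).choose 2 ∧
    intraEdges G ζ ≤ numEdges G ∧
    numEdges G - intraEdges G ζ ≤ (Fintype.card V).choose 2 - intraPairs ζ := by
  set A : Finset (Sym2 V) :=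
    univ.filter fun e : Sym2 V => ¬ e.IsDiag ∧ ∃ P ∈ ζ.parts, ∀ v ∈ e, v ∈ P with hA
  set D : Finset (Sym2 V) := univ.filter fun e : Sym2 V => ¬ e.IsDiag with hD
  have hAD : A ⊆ D := by
    intro e he
    simp only [hA, hD, mem_filter, mem_univ, true_and] at he ⊢
    exact he.1
  have hsub : (G.edgeFinset.filter fun e => ∃ P ∈ ζ.parts, ∀ v ∈ e, v ∈ P) ⊆ A := by
    intro e he
    simp only [mem_filter, hA, mem_univ, true_and] at he ⊢
    exact ⟨SimpleGraph.not_isDiag_of_mem_edgeFinset he.1, he.2⟩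
  have h1 : intraEdges G ζ ≤ intraPairs ζ := by
    rw [intraEdges, ← cardA ζ]
    exact Finset.card_le_card hsub
  have h2 : intraPairs ζ ≤ (Fintype.card V).choose 2 := by
    rw [← cardA ζ, ← cardD]
    exact Finset.card_le_card hAD
  have h3 : intraEdges G ζ ≤ numEdges G := Finset.card_filter_le _ _
  refine ⟨h1, h2, h3, ?_⟩
  have hcompl : numEdges G - intraEdges G ζ
      = (G.edgeFinset.filter fun e => ¬ ∃ P ∈ ζ.parts, ∀ v ∈ e, v ∈ P).card := by
    have := Finset.card_filter_add_card_filter_not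
      (s := G.edgeFinset) (p := fun e => ∃ P ∈ ζ.parts, ∀ v ∈ e, v ∈ P)
    rw [intraEdges, numEdges]
    omega
  rw [hcompl, ← cardA ζ, ← cardD]
  have hsub2 : (G.edgeFinset.filter fun e => ¬ ∃ P ∈ ζ.parts, ∀ v ∈ e, v ∈ P) ⊆ D \ A := by
    intro e he
    simp only [mem_filter, hA, hD, mem_sdiff, mem_univ, true_and] at he ⊢
    exact ⟨SimpleGraph.not_isDiag_of_mem_edgeFinset he.1, fun h => he.2 h.2⟩
  calc (G.edgeFinset.filter fun e => ¬ ∃ P ∈ ζ.parts, ∀ v ∈ e, v ∈ P).card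
      ≤ (D \ A).card := Finset.card_le_card hsub2
    _ = D.card - A.card := Finset.card_sdiff_of_subset hAD

lemma surprise_eq (G : SimpleGraph V) (ζ : Finpartition (univ : Finset V)) :
    surprise G ζ = (Tn (numEdges G) (intraPairs ζ)
        ((Fintype.card V).choose 2 - intraPairs ζ) (intraEdges G ζ) : ℚ)
      / (((Fintype.card V).choose 2).choose (numEdges G) : ℚ) := by
  rw [surprise, surpriseVal, Tn]
  push_cast
  rfl

lemma exists_edge_partition (G : SimpleGraph V) {u v : V} (huv : G.Adj u v) :
    ∃ ζe : Finpartition (univ : Finset V), intraPairs ζe = 1 ∧ intraEdges G ζe = 1 := by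
  have huvne : u ≠ v := huv.ne
  set r : V → V → Prop :=
    fun x y => x = y ∨ ((x = u ∨ x = v) ∧ (y = u ∨ y = v)) with hr
  have hequiv : Equivalence r := by
    constructor
    · intro x; exact Or.inl rfl
    · intro x y h; rcases h with rfl | h; exacts [Or.inl rfl, Or.inr ⟨h.2, h.1⟩]
    · intro x y z hxy hyz
      rcases hxy with rfl | hxy
      · exact hyz
      · rcases hyz with rfl | hyz
        · exact Or.inr hxy
        · exact Or.inr ⟨hxy.1, hyz.2⟩
  set ζe := Finpartition.ofSetoid ⟨r, hequiv⟩ with hζe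
  have hpart : ∀ a b : V, b ∈ ζe.part a ↔ r a b := fun a b =>
    Finpartition.mem_part_ofSetoid_iff_rel
  have hkey : (univ.filter fun e : Sym2 V => ¬ e.IsDiag ∧ ∃ P ∈ ζe.parts, ∀ w ∈ e, w ∈ P)
      = {s(u, v)} := by
    ext e
    simp only [mem_filter, mem_univ, true_and, Finset.mem_singleton]
    constructor
    · rintro ⟨hd, P, hP, hmem⟩
      induction e using Sym2.ind with | _ a b =>
      rw [Sym2.mk_isDiag_iff] at hd
      have haP : a ∈ P := hmem a (Sym2.mem_mk_left a b)
      have hbP : b ∈ P := hmem b (Sym2.mem_mk_right a b)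
      have hPa : ζe.part a = P := ζe.part_eq_of_mem hP haP
      have hrab : r a b := (hpart a b).mp (hPa ▸ hbP)
      rcases hrab with rfl | ⟨ha, hb⟩
      · exact absurd rfl hd
      · rcases ha with rfl | rfl <;> rcases hb with rfl | rfl
        · exact absurd rfl hd
        · rfl
        · exact Sym2.eq_swap
        · exact absurd rfl hd
    · rintro rfl
      refine ⟨by rw [Sym2.mk_isDiag_iff]; exact huvne, ζe.part u,
        ζe.part_mem.mpr (mem_univ u), fun w hw => ?_⟩
      rw [Sym2.mem_iff] at hw
      rcases hw with rfl | rfl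
      · exact ζe.mem_part (mem_univ w)
      · exact (hpart u w).mpr (Or.inr ⟨Or.inl rfl, Or.inr rfl⟩)
  refine ⟨ζe, ?_, ?_⟩
  · rw [← cardA ζe, hkey, Finset.card_singleton]
  · rw [intraEdges]
    have : (G.edgeFinset.filter fun e => ∃ P ∈ ζe.parts, ∀ w ∈ e, w ∈ P) = {s(u, v)} := by
      apply Finset.Subset.antisymm
      · intro e he
        rw [← hkey]
        simp only [mem_filter, mem_univ, true_and] at he ⊢
        exact ⟨SimpleGraph.not_isDiag_of_mem_edgeFinset he.1, he.2⟩
      · intro e he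
        rw [Finset.mem_singleton] at he
        subst he
        have h2 : ¬(s(u,v) : Sym2 V).IsDiag ∧ ∃ P ∈ ζe.parts, ∀ w ∈ s(u,v), w ∈ P := by
          have hm := hkey ▸ Finset.mem_singleton_self s(u,v)
          simpa using (Finset.mem_filter.mp hm).2
        simp only [mem_filter]
        exact ⟨SimpleGraph.mem_edgeFinset.mpr ((G.mem_edgeSet).mpr huv), h2.2⟩
    rw [this, Finset.card_singleton]

/-- A surprise-optimal clustering of a graph with at least one edge that is not complete
is Pareto-optimal with respect to maximizing intracluster edges and minimizing
intracluster vertex pairs. -/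
theorem stmt6 (G : SimpleGraph V) (hE : G.edgeSet.Nonempty) (hnc : G ≠ ⊤)
    (ζ : Finpartition (univ : Finset V))
    (hopt : ∀ ζ' : Finpartition (univ : Finset V), surprise G ζ ≤ surprise G ζ')
    (ζ' : Finpartition (univ : Finset V))
    (he : intraEdges G ζ ≤ intraEdges G ζ') (hp : intraPairs ζ' ≤ intraPairs ζ) :
    intraEdges G ζ' = intraEdges G ζ ∧ intraPairs ζ' = intraPairs ζ := by
  obtain ⟨e, heE⟩ := hE
  obtain ⟨u, v, huv⟩ : ∃ u v, G.Adj u v := by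
    induction e using Sym2.ind with | _ a b => exact ⟨a, b, (G.mem_edgeSet).mp heE⟩
  obtain ⟨h1, h2, h3, h4⟩ := intra_facts G ζ
  obtain ⟨h1', h2', h3', h4'⟩ := intra_facts G ζ'
  set pc := (Fintype.card V).choose 2 with hpc
  set me := numEdges G with hme
  set ip := intraPairs ζ with hip0
  set ie := intraEdges G ζ with hie0
  set ip' := intraPairs ζ' with hip0'
  set ie' := intraEdges G ζ' with hie0'
  have hm1 : 1 ≤ me := by
    rw [hme, numEdges]
    exact Finset.card_pos.mpr ⟨s(u, v), SimpleGraph.mem_edgeFinset.mpr ((G.mem_edgeSet).mpr huv)⟩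
  have hmlt : me < pc := by
    rw [hme, hpc, numEdges, ← SimpleGraph.card_edgeFinset_top_eq_card_choose_two]
    exact Finset.card_lt_card
      (SimpleGraph.edgeFinset_ssubset_edgeFinset.mpr (lt_top_iff_ne_top.mpr hnc))
  have hc : (0 : ℚ) < ((pc.choose me : ℕ) : ℚ) := by
    exact_mod_cast Nat.choose_pos hmlt.le
  have hmono : ∀ (a b t : ℕ), a ≤ b → b ≤ pc →
      Tn me a (pc - a) t ≤ Tn me b (pc - b) t := by
    intro a b t hab hbp
    have := Tn_mono_k me (pc - b) t (b - a) a
    rw [show pc - b + (b - a) = pc - a by omega, show a + (b - a) = b by omega] at this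
    exact this
  have hcontra : ∀ ζ'' : Finpartition (univ : Finset V),
      Tn me (intraPairs ζ'') (pc - intraPairs ζ'') (intraEdges G ζ'')
        < Tn me ip (pc - ip) ie → False := by
    intro ζ'' hT
    have hS : surprise G ζ'' < surprise G ζ := by
      rw [surprise_eq, surprise_eq, ← hpc, ← hme, ← hip0, ← hie0]
      rw [div_lt_div_iff_of_pos_right hc]
      exact_mod_cast hT
    exact absurd (hopt ζ'') (not_le.mpr hS)
  clear_value pc me ip ie ip' ie'
  have hie : ie' = ie := by
    by_contra hne
    have hlt : ie < ie' := lt_of_le_of_ne he fun h => hne h.symm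
    refine hcontra ζ' ?_
    rw [← hip0', ← hie0']
    calc Tn me ip' (pc - ip') ie' ≤ Tn me ip (pc - ip) ie' := hmono ip' ip ie' hp h2
      _ ≤ Tn me ip (pc - ip) (ie + 1) := Tn_anti _ _ hlt
      _ < Tn me ip (pc - ip) ie := by
          rw [Tn_peel _ _ h3]
          have t1 : 0 < ip.choose ie := Nat.choose_pos h1
          have t2 : 0 < (pc - ip).choose (me - ie) := Nat.choose_pos h4
          have := Nat.mul_pos t1 t2
          omega
  have hie1 : 1 ≤ ie := by
    by_contra h0
    have hie00 : ie = 0 := by omega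
    obtain ⟨ζe, hP1, hE1⟩ := exists_edge_partition G huv
    refine hcontra ζe ?_
    rw [hP1, hE1, hie00]
    have hz : Tn me ip (pc - ip) 0 = pc.choose me := by
      rw [Tn_zero, show ip + (pc - ip) = pc by omega]
    rw [hz]
    have hT : Tn me 1 (pc - 1) 1 = (pc - 1).choose (me - 1) := by
      rw [Tn_peel _ _ hm1]
      have hz2 : Tn me 1 (pc - 1) 2 = 0 := by
        apply Finset.sum_eq_zero
        intro i hi
        rw [Nat.choose_eq_zero_of_lt (by rw [Finset.mem_Icc] at hi; omega)]
        simp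
      rw [hz2]
      simp
    rw [hT]
    obtain ⟨mm, hmm⟩ : ∃ mm, me = mm + 1 := ⟨me - 1, by omega⟩
    obtain ⟨pp, hpp⟩ : ∃ pp, pc = pp + 1 := ⟨pc - 1, by omega⟩
    rw [hmm, hpp]
    simp only [Nat.add_sub_cancel]
    rw [Nat.choose_succ_succ pp mm]
    have : 0 < pp.choose (mm + 1) := Nat.choose_pos (by omega)
    simp only [Nat.succ_eq_add_one]
    omega
  refine ⟨hie, ?_⟩
  by_contra hne
  have hlt : ip' < ip := lt_of_le_of_ne hp hne
  refine hcontra ζ' ?_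
  rw [← hip0', ← hie0']
  calc Tn me ip' (pc - ip') ie'
      ≤ Tn me (ip - 1) (pc - (ip - 1)) ie' := hmono ip' (ip - 1) ie' (by omega) (by omega)
    _ = Tn me (ip - 1) (pc - ip + 1) ie := by rw [hie, show pc - (ip - 1) = pc - ip + 1 by omega]
    _ < Tn me ip (pc - ip) ie := by
        have hs := Tn_succ_eq (m := me) (s := ie - 1) (ip - 1) (pc - ip) (by omega)
        rw [show ie - 1 + 1 = ie by omega, show ip - 1 + 1 = ip by omega] at hs
        have t1 : 0 < (ip - 1).choose (ie - 1) := Nat.choose_pos (by omega)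
        have t2 : 0 < (pc - ip).choose (me - ie) := Nat.choose_pos h4
        have := Nat.mul_pos t1 t2
        omega
end

section
/- Let G be a finite simple graph that has at least one edge and is not a complete graph, and let ζ be a surprise-optimal clustering of G. Then i_e(ζ) > 0 and p − i_p(ζ) > m − i_e(ζ). -/
open Finset

variable {V : Type*} [Fintype V] [DecidableEq V]

lemma choose_two_add_le (a b : ℕ) : a.choose 2 + b.choose 2 ≤ (a + b).choose 2 := by
  rw [← Nat.cast_le (α := ℚ)]
  push_cast [Nat.cast_choose_two]
  have ha : (0:ℚ) ≤ a := by positivity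
  have hb : (0:ℚ) ≤ b := by positivity
  nlinarith [mul_nonneg ha hb]

lemma sum_choose_two_le {β : Type*} (t : Finset β) (f : β → ℕ) :
    ∑ x ∈ t, (f x).choose 2 ≤ (∑ x ∈ t, f x).choose 2 := by
  induction t using Finset.cons_induction with
  | empty => simp
  | cons a t ha ih =>
    rw [sum_cons, sum_cons]
    exact le_trans (Nat.add_le_add_left ih _) (choose_two_add_le _ _)

lemma vander (p ip m : ℕ) (h : ip ≤ p) :
    ∑ i ∈ Finset.Icc 0 m, ip.choose i * (p - ip).choose (m - i) = p.choose m := by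
  have h1 : Finset.Icc 0 m = Finset.range (m + 1) := by ext x; simp
  rw [h1]
  have := Nat.add_choose_eq ip (p - ip) m
  rw [Nat.add_sub_cancel' h] at this
  rw [this, Finset.Nat.sum_antidiagonal_eq_sum_range_succ_mk]

lemma surpriseVal_eq_one {p m ip ie : ℕ} (hip : ip ≤ p) (hmp : m ≤ p) (hie : ie ≤ m)
    (h : ie = 0 ∨ p - ip ≤ m - ie) : surpriseVal p m ip ie = 1 := by
  have hpos : (0:ℚ) < p.choose m := by exact_mod_cast Nat.choose_pos hmp
  rw [surpriseVal, div_eq_one_iff_eq hpos.ne']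
  have hsum : ∑ i ∈ Finset.Icc ie m, (ip.choose i * (p - ip).choose (m - i) : ℚ)
      = ∑ i ∈ Finset.Icc 0 m, (ip.choose i * (p - ip).choose (m - i) : ℚ) := by
    apply Finset.sum_subset
    · intro x hx; simp only [mem_Icc] at hx ⊢; omega
    · intro x hx hx'
      simp only [mem_Icc] at hx hx'
      have hlt : p - ip < m - x := by omega
      rw [Nat.choose_eq_zero_of_lt hlt]
      simp
  rw [hsum]
  push_cast [← vander p ip m hip]
  rfl

lemma surpriseVal_lt_one {p m : ℕ} (hm : 1 ≤ m) (hmp : m < p) : surpriseVal p m 1 1 < 1 := by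
  have hpos : (0:ℚ) < p.choose m := by exact_mod_cast Nat.choose_pos hmp.le
  rw [surpriseVal, div_lt_one hpos]
  have hsum : ∑ i ∈ Finset.Icc 1 m, ((1:ℕ).choose i * (p - 1).choose (m - i) : ℚ)
      = (p - 1).choose (m - 1) := by
    rw [Finset.sum_eq_single_of_mem 1 (by simp [hm])]
    · simp
    · intro i hi hne
      simp only [mem_Icc] at hi
      rw [Nat.choose_eq_zero_of_lt (by omega)]
      simp
  rw [hsum]
  have : (p - 1).choose (m - 1) < p.choose m := by
    obtain ⟨p', rfl⟩ : ∃ p', p = p' + 1 := ⟨p - 1, by omega⟩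
    obtain ⟨m', rfl⟩ : ∃ m', m = m' + 1 := ⟨m - 1, by omega⟩
    simp only [Nat.add_sub_cancel, Nat.choose_succ_succ]
    have h9 : 0 < p'.choose (m' + 1) := Nat.choose_pos (by omega)
    simp only [Nat.succ_eq_add_one]
    omega
  exact_mod_cast this

def pairSetoid (u v : V) : Setoid V where
  r x y := x = y ∨ (x = u ∧ y = v) ∨ (x = v ∧ y = u)
  iseqv := by
    refine ⟨fun x => Or.inl rfl, ?_, ?_⟩
    · rintro x y (rfl | ⟨rfl, rfl⟩ | ⟨rfl, rfl⟩) <;> tauto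
    · rintro x y z (rfl | ⟨rfl, rfl⟩ | ⟨rfl, rfl⟩) (h | h | h) <;> tauto

instance (u v : V) : DecidableRel (pairSetoid u v).r := fun x y =>
  decidable_of_iff (x = y ∨ (x = u ∧ y = v) ∨ (x = v ∧ y = u)) Iff.rfl

def pairPartition (u v : V) : Finpartition (univ : Finset V) :=
  Finpartition.ofSetoid (pairSetoid u v)

lemma pairPartition_part_u (u v : V) : (pairPartition u v).part u = {u, v} := by
  ext b
  rw [pairPartition, Finpartition.mem_part_ofSetoid_iff_rel]
  simp [pairSetoid]
  change u = b ∨ (u = u ∧ b = v) ∨ (u = v ∧ b = u) ↔ b = u ∨ b = v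
  tauto

lemma pairPartition_part_w (u v w : V) (hwu : w ≠ u) (hwv : w ≠ v) :
    (pairPartition u v).part w = {w} := by
  ext b
  rw [pairPartition, Finpartition.mem_part_ofSetoid_iff_rel]
  simp [pairSetoid]
  constructor
  · rintro (rfl | ⟨rfl, rfl⟩ | ⟨rfl, rfl⟩) <;> tauto
  · rintro rfl; tauto

lemma pairPartition_part_v (u v : V) : (pairPartition u v).part v = {u, v} := by
  have h1 : ({u, v} : Finset V) ∈ (pairPartition u v).parts := by
    rw [← pairPartition_part_u u v]; exact (pairPartition u v).part_mem.2 (mem_univ u)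
  exact (pairPartition u v).part_eq_of_mem h1 (by simp)

lemma pairPartition_parts (u v : V) (huv : u ≠ v) :
    (pairPartition u v).parts
      = insert {u, v} (((univ : Finset V) \ {u, v}).image fun w => ({w} : Finset V)) := by
  ext P
  constructor
  · intro hP
    obtain ⟨a, -, rfl⟩ := (pairPartition u v).part_surjOn hP
    by_cases hau : a = u
    · subst hau; rw [pairPartition_part_u]; exact mem_insert_self _ _
    by_cases hav : a = v
    · subst hav; rw [pairPartition_part_v]; exact mem_insert_self _ _
    · rw [pairPartition_part_w u v a hau hav]
      exact mem_insert_of_mem (mem_image_of_mem _ (by simp [hau, hav]))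
  · intro hP
    rcases mem_insert.1 hP with rfl | hP
    · rw [← pairPartition_part_u u v]
      exact (pairPartition u v).part_mem.2 (mem_univ u)
    · obtain ⟨w, hw, rfl⟩ := mem_image.1 hP
      simp only [mem_sdiff, mem_insert, mem_singleton] at hw
      rw [← pairPartition_part_w u v w (by tauto) (by tauto)]
      exact (pairPartition u v).part_mem.2 (mem_univ w)

lemma intraPairs_pairPartition (u v : V) (huv : u ≠ v) :
    intraPairs (pairPartition u v) = 1 := by
  rw [intraPairs, pairPartition_parts u v huv]
  rw [sum_insert]
  · rw [Finset.sum_image (by intro x _ y _ h; simpa using h)]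
    simp [card_insert_of_notMem, huv]
  · intro h
    obtain ⟨w, -, hw⟩ := mem_image.1 h
    have : ({u, v} : Finset V).card = 1 := by rw [← hw]; simp
    rw [card_insert_of_notMem (by simpa using huv), card_singleton] at this
    omega

lemma intraEdges_pairPartition (G : SimpleGraph V) (u v : V) (huv : G.Adj u v) :
    intraEdges G (pairPartition u v) = 1 := by
  classical
  rw [intraEdges]
  convert_to ({s(u, v)} : Finset (Sym2 V)).card = 1
  · congr 1
    ext e
    simp only [mem_filter, mem_singleton, SimpleGraph.mem_edgeFinset]
    constructor
    · rintro ⟨he, P, hP, hmem⟩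
      induction e using Sym2.ind with
      | _ x y =>
        rw [SimpleGraph.mem_edgeSet] at he
        have hx : x ∈ P := hmem x (by simp)
        have hy : y ∈ P := hmem y (by simp)
        have hPx : P = (pairPartition u v).part x :=
          ((pairPartition u v).part_eq_of_mem hP hx).symm
        have hrel : (pairSetoid u v).r x y := by
          rw [← Finpartition.mem_part_ofSetoid_iff_rel]
          rw [pairPartition] at hPx
          rwa [hPx] at hy
        rcases hrel with rfl | ⟨rfl, rfl⟩ | ⟨rfl, rfl⟩
        · exact absurd rfl he.ne
        · rfl
        · rw [Sym2.eq_swap]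
    · rintro rfl
      refine ⟨huv, {u, v}, ?_, ?_⟩
      · rw [← pairPartition_part_u u v]
        exact (pairPartition u v).part_mem.2 (mem_univ u)
      · intro x hx
        rw [Sym2.mem_iff] at hx
        simpa using hx
  · simp

lemma intraPairs_le (ζ : Finpartition (univ : Finset V)) :
    intraPairs ζ ≤ (Fintype.card V).choose 2 := by
  have h2 : ∑ P ∈ ζ.parts, P.card = Fintype.card V := by
    rw [ζ.sum_card_parts, card_univ]
  calc intraPairs ζ ≤ (∑ P ∈ ζ.parts, P.card).choose 2 := by
        exact sum_choose_two_le ζ.parts Finset.card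
    _ = _ := by rw [h2]

lemma numEdges_lt (G : SimpleGraph V) (hnc : G ≠ ⊤) :
    numEdges G < (Fintype.card V).choose 2 := by
  classical
  rw [numEdges, ← SimpleGraph.card_edgeFinset_top_eq_card_choose_two (V := V)]
  exact card_lt_card (SimpleGraph.edgeFinset_strict_mono (lt_top_iff_ne_top.2 hnc))

lemma intraEdges_le (G : SimpleGraph V) (ζ : Finpartition (univ : Finset V)) :
    intraEdges G ζ ≤ numEdges G := by
  classical
  exact card_filter_le _ _

lemma numEdges_pos (G : SimpleGraph V) (hE : G.edgeSet.Nonempty) : 0 < numEdges G := by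
  classical
  rw [numEdges, card_pos]
  obtain ⟨e, he⟩ := hE
  exact ⟨e, by rwa [SimpleGraph.mem_edgeFinset]⟩

/-- For a surprise-optimal clustering `ζ` of a graph with at least one edge that is not
complete, `i_e(ζ) > 0` and `p − i_p(ζ) > m − i_e(ζ)`. -/
theorem stmt7 (G : SimpleGraph V) (hE : G.edgeSet.Nonempty) (hnc : G ≠ ⊤)
    (ζ : Finpartition (univ : Finset V))
    (hopt : ∀ ζ' : Finpartition (univ : Finset V), surprise G ζ ≤ surprise G ζ') :
    0 < intraEdges G ζ ∧
      numEdges G - intraEdges G ζ < (Fintype.card V).choose 2 - intraPairs ζ := by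
  classical
  by_contra hcon
  have hm0 : 0 < numEdges G := numEdges_pos G hE
  have hmp : numEdges G < (Fintype.card V).choose 2 := numEdges_lt G hnc
  have h1 : surprise G ζ = 1 := by
    rw [surprise]
    exact surpriseVal_eq_one (intraPairs_le ζ) hmp.le (intraEdges_le G ζ) (by omega)
  obtain ⟨e, he⟩ := hE
  induction e using Sym2.ind with
  | _ u v =>
  rw [SimpleGraph.mem_edgeSet] at he
  have h2 : surprise G (pairPartition u v) < 1 := by
    rw [surprise, intraPairs_pairPartition u v he.ne, intraEdges_pairPartition G u v he]
    exact surpriseVal_lt_one hm0 hmp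
  have h3 := hopt (pairPartition u v)
  rw [h1] at h3
  linarith
end

section
/- Let G be a finite simple graph that has at least one edge and is not a complete graph, and let ζ be a surprise-optimal clustering of G. Then i_e(ζ) ≥ i_e(ζ') for every clustering ζ' of G all of whose clusters induce complete subgraphs (cliques) of G. -/
open Finset

variable {V : Type*} [Fintype V] [DecidableEq V]

namespace Stmt9Aux

/-! ### Numeric auxiliary lemmas about the tail sum -/

/-- The (numerator of the) tail of the hypergeometric distribution, as a natural number. -/
def F (p a k m : ℕ) : ℕ := ∑ i ∈ Finset.Icc k m, a.choose i * (p - a).choose (m - i)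

lemma F_self (p k m : ℕ) (hkm : k ≤ m) : F p k k m = (p - k).choose (m - k) := by
  unfold F
  rw [Finset.sum_eq_single k]
  · simp
  · intro i hi hik
    have : k < i := lt_of_le_of_ne (Finset.mem_Icc.mp hi).1 (Ne.symm hik)
    simp [Nat.choose_eq_zero_of_lt this]
  · intro h; exact absurd (Finset.mem_Icc.mpr ⟨le_rfl, hkm⟩) h

lemma F_mono_step (p a k m : ℕ) (hap : a < p) : F p a k m ≤ F p (a + 1) k m := by
  set s := p - a - 1 with hs
  have hpa : p - a = s + 1 := by omega
  have hpa1 : p - (a + 1) = s := by omega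
  have hL : F p a k m = (∑ i ∈ Finset.Icc k m, a.choose i * s.choose (m - i)) +
      ∑ i ∈ Finset.Icc k m, (if i < m then a.choose i * s.choose (m - i - 1) else 0) := by
    unfold F
    rw [← Finset.sum_add_distrib]
    refine Finset.sum_congr rfl fun i hi => ?_
    have him : i ≤ m := (Finset.mem_Icc.mp hi).2
    by_cases h : i < m
    · have h1 : m - i = (m - i - 1) + 1 := by omega
      rw [hpa, if_pos h]
      conv_lhs => rw [h1, Nat.choose_succ_succ']
      rw [Nat.mul_add, Nat.add_comm, h1.symm]
    · have h1 : i = m := by omega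
      subst h1
      simp [hpa]
  have hR : F p (a + 1) k m = (∑ i ∈ Finset.Icc k m, a.choose i * s.choose (m - i)) +
      ∑ i ∈ Finset.Icc k m, (if 1 ≤ i then a.choose (i - 1) * s.choose (m - i) else 0) := by
    unfold F
    rw [← Finset.sum_add_distrib]
    refine Finset.sum_congr rfl fun i hi => ?_
    rw [hpa1]
    by_cases h : 1 ≤ i
    · have h1 : i = (i - 1) + 1 := by omega
      rw [if_pos h, ← Nat.add_mul]
      conv_lhs => rw [h1, Nat.choose_succ_succ', ← h1]
      rw [Nat.add_comm (a.choose (i - 1)) (a.choose i)]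
    · have h1 : i = 0 := by omega
      subst h1
      simp
  rw [hL, hR]
  refine Nat.add_le_add_left ?_ _
  have hZ : (∑ i ∈ Finset.Icc k m, (if i < m then a.choose i * s.choose (m - i - 1) else 0)) =
      ∑ j ∈ Finset.Icc (k + 1) m, a.choose (j - 1) * s.choose (m - j) := by
    rw [Finset.sum_ite, Finset.sum_const_zero, add_zero]
    refine Finset.sum_nbij' (fun i => i + 1) (fun j => j - 1) ?_ ?_ ?_ ?_ ?_
    · intro i hi
      simp only [Finset.mem_filter, Finset.mem_Icc] at hi ⊢
      omega
    · intro j hj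
      simp only [Finset.mem_filter, Finset.mem_Icc] at hj ⊢
      omega
    · intro i hi
      omega
    · intro j hj
      simp only [Finset.mem_filter, Finset.mem_Icc] at hj
      omega
    · intro i hi
      simp only [Finset.mem_filter, Finset.mem_Icc] at hi
      have e1 : i + 1 - 1 = i := by omega
      have e2 : m - (i + 1) = m - i - 1 := by omega
      rw [e1, e2]
  rw [hZ]
  calc ∑ j ∈ Finset.Icc (k + 1) m, a.choose (j - 1) * s.choose (m - j)
      ≤ ∑ j ∈ (Finset.Icc k m).filter (fun j => 1 ≤ j), a.choose (j - 1) * s.choose (m - j) := by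
        refine Finset.sum_le_sum_of_subset ?_
        intro j hj
        simp only [Finset.mem_Icc] at hj
        simp only [Finset.mem_filter, Finset.mem_Icc]
        omega
    _ = ∑ i ∈ Finset.Icc k m, (if 1 ≤ i then a.choose (i - 1) * s.choose (m - i) else 0) := by
        rw [Finset.sum_ite, Finset.sum_const_zero, add_zero]

lemma F_mono (p k m : ℕ) {a b : ℕ} (hab : a ≤ b) (hbp : b ≤ p) : F p a k m ≤ F p b k m := by
  induction b, hab using Nat.le_induction with
  | base => exact le_rfl
  | succ b hab ih =>
    exact le_trans (ih (by omega)) (F_mono_step p b k m (by omega))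

lemma gstep (p m k : ℕ) (h1 : k < m) (h2 : m < p) :
    (p - (k + 1)).choose (m - (k + 1)) < (p - k).choose (m - k) := by
  have e1 : p - k = (p - (k + 1)) + 1 := by omega
  have e2 : m - k = (m - (k + 1)) + 1 := by omega
  rw [e1, e2, Nat.choose_succ_succ']
  have : 0 < (p - (k + 1)).choose (m - (k + 1) + 1) :=
    Nat.choose_pos (by omega)
  omega

lemma gdec (p m : ℕ) (hmp : m < p) : ∀ k, k ≤ m → ∀ j, j < k →
    (p - k).choose (m - k) < (p - j).choose (m - j) := by
  intro k
  induction k with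
  | zero => omega
  | succ k ih =>
    intro hkm j hjk
    rcases Nat.lt_succ_iff_lt_or_eq.mp hjk with h | h
    · exact lt_trans (gstep p m k (by omega) hmp) (ih (by omega) j h)
    · subst h; exact gstep p m j (by omega) hmp

/-! ### Graph-theoretic auxiliary lemmas -/

/-- The set of intracluster (unordered, off-diagonal) pairs of a clustering. -/
noncomputable def pairsIn (ζ : Finpartition (univ : Finset V)) : Finset (Sym2 V) :=
  ζ.parts.biUnion fun P => P.offDiag.image Sym2.mk.uncurry

lemma mem_of_mem_image_offDiag {P : Finset V} {e : Sym2 V}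
    (he : e ∈ P.offDiag.image Sym2.mk.uncurry) : ∀ v ∈ e, v ∈ P := by
  obtain ⟨⟨u, w⟩, huw, rfl⟩ := Finset.mem_image.mp he
  rw [Finset.mem_offDiag] at huw
  intro v hv
  rcases Sym2.mem_iff.mp hv with rfl | rfl
  · exact huw.1
  · exact huw.2.1

lemma pairsIn_disj (ζ : Finpartition (univ : Finset V)) :
    ∀ P ∈ ζ.parts, ∀ Q ∈ ζ.parts, P ≠ Q →
      Disjoint (P.offDiag.image Sym2.mk.uncurry) (Q.offDiag.image Sym2.mk.uncurry) := by
  intro P hP Q hQ hPQ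
  rw [Finset.disjoint_left]
  intro e heP heQ
  obtain ⟨⟨u, w⟩, huw, rfl⟩ := Finset.mem_image.mp heP
  rw [Finset.mem_offDiag] at huw
  have hu : u ∈ Q := mem_of_mem_image_offDiag heQ u (Sym2.mem_mk_left u w)
  have hdis : Disjoint P Q := ζ.disjoint hP hQ hPQ
  exact Finset.disjoint_left.mp hdis huw.1 hu

lemma card_pairsIn (ζ : Finpartition (univ : Finset V)) :
    (pairsIn ζ).card = intraPairs ζ := by
  rw [pairsIn, Finset.card_biUnion (pairsIn_disj ζ)]
  exact Finset.sum_congr rfl fun P _ => Sym2.card_image_offDiag P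

open scoped Classical in
lemma intraFilter_subset (G : SimpleGraph V) (ζ : Finpartition (univ : Finset V)) :
    (G.edgeFinset.filter fun e => ∃ P ∈ ζ.parts, ∀ v ∈ e, v ∈ P) ⊆ pairsIn ζ := by
  intro e he
  rw [Finset.mem_filter] at he
  obtain ⟨heG, P, hP, hall⟩ := he
  induction e with
  | _ u w =>
    have hadj : G.Adj u w := by
      rw [SimpleGraph.mem_edgeFinset, SimpleGraph.mem_edgeSet] at heG
      exact heG
    refine Finset.mem_biUnion.mpr ⟨P, hP, Finset.mem_image.mpr ⟨(u, w), ?_, rfl⟩⟩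
    rw [Finset.mem_offDiag]
    exact ⟨hall u (Sym2.mem_mk_left u w), hall w (Sym2.mem_mk_right u w), hadj.ne⟩

lemma intraEdges_le_intraPairs (G : SimpleGraph V) (ζ : Finpartition (univ : Finset V)) :
    intraEdges G ζ ≤ intraPairs ζ := by
  classical
  rw [intraEdges, ← card_pairsIn ζ]
  exact Finset.card_le_card (intraFilter_subset G ζ)

lemma intraEdges_eq_of_clique (G : SimpleGraph V) (ζ : Finpartition (univ : Finset V))
    (hclique : ∀ P ∈ ζ.parts, G.IsClique (P : Set V)) :
    intraEdges G ζ = intraPairs ζ := by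
  classical
  rw [intraEdges, ← card_pairsIn ζ]
  congr 1
  apply Finset.Subset.antisymm (intraFilter_subset G ζ)
  intro e he
  obtain ⟨P, hP, hePd⟩ := Finset.mem_biUnion.mp he
  obtain ⟨⟨u, w⟩, huw, rfl⟩ := Finset.mem_image.mp hePd
  rw [Finset.mem_offDiag] at huw
  rw [Finset.mem_filter]
  constructor
  · rw [SimpleGraph.mem_edgeFinset]
    exact hclique P hP huw.1 huw.2.1 huw.2.2
  · refine ⟨P, hP, ?_⟩
    intro v hv
    rcases Sym2.mem_iff.mp hv with rfl | rfl
    · exact huw.1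
    · exact huw.2.1

lemma intraEdges_le_numEdges (G : SimpleGraph V) (ζ : Finpartition (univ : Finset V)) :
    intraEdges G ζ ≤ numEdges G := by
  classical
  exact Finset.card_filter_le _ _

lemma intraPairs_le (ζ : Finpartition (univ : Finset V)) :
    intraPairs ζ ≤ (Fintype.card V).choose 2 := by
  rw [← card_pairsIn ζ, ← Finset.card_univ (α := V), ← Sym2.card_image_offDiag (univ : Finset V)]
  refine Finset.card_le_card ?_
  intro e he
  obtain ⟨P, hP, hePd⟩ := Finset.mem_biUnion.mp he
  obtain ⟨⟨u, w⟩, huw, rfl⟩ := Finset.mem_image.mp hePd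
  rw [Finset.mem_offDiag] at huw
  exact Finset.mem_image.mpr ⟨(u, w), Finset.mem_offDiag.mpr
    ⟨Finset.mem_univ u, Finset.mem_univ w, huw.2.2⟩, rfl⟩

lemma numEdges_lt (G : SimpleGraph V) (hnc : G ≠ ⊤) :
    numEdges G < (Fintype.card V).choose 2 := by
  classical
  rw [numEdges, ← SimpleGraph.card_edgeFinset_top_eq_card_choose_two]
  exact Finset.card_lt_card
    (SimpleGraph.edgeFinset_ssubset_edgeFinset.mpr (lt_of_le_of_ne le_top hnc))

lemma surpriseVal_eq (p m a b : ℕ) :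
    surpriseVal p m a b = (F p a b m : ℚ) / (p.choose m : ℚ) := by
  rw [surpriseVal, F]
  push_cast
  rfl

end Stmt9Aux

/-- A surprise-optimal clustering `ζ` of a graph with at least one edge that is not
complete has at least as many intracluster edges as any clustering into cliques. -/
theorem stmt9 (G : SimpleGraph V) (hE : G.edgeSet.Nonempty) (hnc : G ≠ ⊤)
    (ζ : Finpartition (univ : Finset V))
    (hopt : ∀ ζ'' : Finpartition (univ : Finset V), surprise G ζ ≤ surprise G ζ'')
    (ζ' : Finpartition (univ : Finset V))
    (hclique : ∀ P ∈ ζ'.parts, G.IsClique (P : Set V)) :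
    intraEdges G ζ' ≤ intraEdges G ζ := by
  classical
  by_contra hcon
  push_neg at hcon
  have hk' : intraEdges G ζ' = intraPairs ζ' := Stmt9Aux.intraEdges_eq_of_clique G ζ' hclique
  have hie_m : intraEdges G ζ ≤ numEdges G := Stmt9Aux.intraEdges_le_numEdges G ζ
  have hk_m : intraPairs ζ' ≤ numEdges G := hk' ▸ Stmt9Aux.intraEdges_le_numEdges G ζ'
  have hmp : numEdges G < (Fintype.card V).choose 2 := Stmt9Aux.numEdges_lt G hnc
  have hip_p : intraPairs ζ ≤ (Fintype.card V).choose 2 := Stmt9Aux.intraPairs_le ζ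
  have hie_ip : intraEdges G ζ ≤ intraPairs ζ := Stmt9Aux.intraEdges_le_intraPairs G ζ
  have hie_k : intraEdges G ζ < intraPairs ζ' := hk' ▸ hcon
  have hnum : Stmt9Aux.F ((Fintype.card V).choose 2) (intraPairs ζ') (intraPairs ζ')
      (numEdges G) <
      Stmt9Aux.F ((Fintype.card V).choose 2) (intraPairs ζ) (intraEdges G ζ) (numEdges G) :=
    calc Stmt9Aux.F _ (intraPairs ζ') (intraPairs ζ') (numEdges G)
        = ((Fintype.card V).choose 2 - intraPairs ζ').choose (numEdges G - intraPairs ζ') :=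
          Stmt9Aux.F_self _ _ _ hk_m
      _ < ((Fintype.card V).choose 2 - intraEdges G ζ).choose (numEdges G - intraEdges G ζ) :=
          Stmt9Aux.gdec _ _ hmp _ hk_m _ hie_k
      _ = Stmt9Aux.F _ (intraEdges G ζ) (intraEdges G ζ) (numEdges G) :=
          (Stmt9Aux.F_self _ _ _ hie_m).symm
      _ ≤ Stmt9Aux.F _ (intraPairs ζ) (intraEdges G ζ) (numEdges G) :=
          Stmt9Aux.F_mono _ _ _ hie_ip hip_p
  have hS := hopt ζ'
  rw [surprise, surprise, hk', Stmt9Aux.surpriseVal_eq, Stmt9Aux.surpriseVal_eq] at hS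
  have hden : (0 : ℚ) < (((Fintype.card V).choose 2).choose (numEdges G) : ℚ) := by
    exact_mod_cast Nat.choose_pos (le_of_lt hmp)
  rw [div_le_div_iff₀ hden hden] at hS
  have hle := le_of_mul_le_mul_right hS hden
  have : Stmt9Aux.F ((Fintype.card V).choose 2) (intraPairs ζ) (intraEdges G ζ) (numEdges G) ≤
      Stmt9Aux.F ((Fintype.card V).choose 2) (intraPairs ζ') (intraPairs ζ') (numEdges G) := by
    exact_mod_cast hle
  omega
end

section
/- Let u₁, u₂, k₁, k₂ ∈ ℕ with u₁ > k₁, u₂ > k₂ and k₁ > k₂, and let f₁, f₂, g₁, g₂ : ℕ → ℕ be functions with f₁(n) ∈ Θ(n^{u₁}), f₂(n) ∈ Θ(n^{u₂}), g₁(n) ∈ Θ(n^{k₁}) and g₂(n) ∈ Θ(n^{k₂}) (as real-valued sequences, for n → ∞). Then C(f₂(n), g₂(n)) ∈ o(C(f₁(n), g₁(n))). -/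
open Finset Filter

lemma pow_mul_fac_le (a b : ℕ) (h : b ≤ a) :
    a ^ b * b.factorial ≤ b ^ b * a.descFactorial b := by
  have hfac : b.factorial = ∏ i ∈ range b, (b - i) := by
    rw [← Finset.prod_range_add_one_eq_factorial, ← Finset.prod_range_reflect]
    exact Finset.prod_congr rfl (fun i hi => by simp only [Finset.mem_range] at hi; omega)
  have e1 : a ^ b * ∏ i ∈ range b, (b - i) = ∏ i ∈ range b, (a * (b - i)) := by
    rw [Finset.prod_mul_distrib, Finset.prod_const, Finset.card_range]
  have e2 : b ^ b * ∏ i ∈ range b, (a - i) = ∏ i ∈ range b, (b * (a - i)) := by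
    rw [Finset.prod_mul_distrib, Finset.prod_const, Finset.card_range]
  rw [hfac, Nat.descFactorial_eq_prod_range, e1, e2]
  apply Finset.prod_le_prod'
  intro i hi
  simp only [Finset.mem_range] at hi
  have h1 : b * i ≤ a * i := Nat.mul_le_mul_right _ h
  have h2 : a * (b - i) = a * b - a * i := by rw [Nat.mul_sub]
  have h3 : b * (a - i) = b * a - b * i := by rw [Nat.mul_sub]
  have h4 : a * i ≤ a * b := Nat.mul_le_mul_left _ hi.le
  have h5 : b * a = a * b := Nat.mul_comm b a
  omega

lemma div_pow_le_choose (a b : ℕ) (h : b ≤ a) :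
    ((a : ℝ) / b) ^ b ≤ a.choose b := by
  rcases Nat.eq_zero_or_pos b with hb | hb
  · subst hb; simp
  have hbR : (0:ℝ) < b := by exact_mod_cast hb
  rw [div_pow, div_le_iff₀ (by positivity)]
  have key : a ^ b ≤ b ^ b * a.choose b := by
    have h1 := pow_mul_fac_le a b h
    rw [Nat.descFactorial_eq_factorial_mul_choose] at h1
    have h2 : a ^ b * b.factorial ≤ (b ^ b * a.choose b) * b.factorial := by
      calc a ^ b * b.factorial ≤ b ^ b * (b.factorial * a.choose b) := h1
        _ = (b ^ b * a.choose b) * b.factorial := by ring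
    exact Nat.le_of_mul_le_mul_right h2 b.factorial_pos
  calc ((a:ℝ))^b ≤ (b:ℝ)^b * a.choose b := by exact_mod_cast key
    _ = (a.choose b : ℝ) * (b:ℝ)^b := by ring


/-- A sequence `h` of naturals is `Θ(n^u)`: there are constants `0 < c₁ ≤ c₂` and a
threshold `N` with `c₁ · n^u ≤ h(n) ≤ c₂ · n^u` for all `n ≥ N`. -/
def IsBigTheta (h : ℕ → ℕ) (u : ℕ) : Prop :=
  ∃ c₁ c₂ : ℝ, 0 < c₁ ∧ c₁ ≤ c₂ ∧ ∃ N : ℕ, ∀ n ≥ N,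
    c₁ * (n : ℝ) ^ u ≤ (h n : ℝ) ∧ (h n : ℝ) ≤ c₂ * (n : ℝ) ^ u

/-- If `u₁ > k₁`, `u₂ > k₂`, `k₁ > k₂`, `f₁ ∈ Θ(n^{u₁})`, `f₂ ∈ Θ(n^{u₂})`,
`g₁ ∈ Θ(n^{k₁})` and `g₂ ∈ Θ(n^{k₂})`, then `C(f₂(n), g₂(n)) ∈ o(C(f₁(n), g₁(n)))`. -/
theorem stmt13 (u₁ u₂ k₁ k₂ : ℕ) (h₁ : k₁ < u₁) (h₂ : k₂ < u₂) (h₃ : k₂ < k₁)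
    (f₁ f₂ g₁ g₂ : ℕ → ℕ)
    (hf₁ : IsBigTheta f₁ u₁) (hf₂ : IsBigTheta f₂ u₂)
    (hg₁ : IsBigTheta g₁ k₁) (hg₂ : IsBigTheta g₂ k₂) :
    Tendsto (fun n => ((f₂ n).choose (g₂ n) : ℝ) / ((f₁ n).choose (g₁ n) : ℝ))
      atTop (nhds 0) := by
  obtain ⟨a₁, A₁, ha₁, ha₁A, N₁, hN₁⟩ := hf₁
  obtain ⟨a₂, A₂, ha₂, ha₂A, N₂, hN₂⟩ := hf₂
  obtain ⟨b₁, B₁, hb₁, hb₁B, M₁, hM₁⟩ := hg₁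
  obtain ⟨b₂, B₂, hb₂, hb₂B, M₂, hM₂⟩ := hg₂
  have hB₁ : (0:ℝ) < B₁ := lt_of_lt_of_le hb₁ hb₁B
  have hB₂ : (0:ℝ) < B₂ := lt_of_lt_of_le hb₂ hb₂B
  refine squeeze_zero' (g := fun n : ℕ => 1/(n:ℝ)) ?_ ?_ tendsto_one_div_atTop_nhds_zero_nat
  · exact Eventually.of_forall fun n => by positivity
  have hc : Tendsto (fun n : ℕ => (n:ℝ)) atTop atTop := tendsto_natCast_atTop_atTop
  filter_upwards [eventually_ge_atTop N₁, eventually_ge_atTop N₂, eventually_ge_atTop M₁,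
    eventually_ge_atTop M₂, hc.eventually_ge_atTop 1, hc.eventually_ge_atTop A₂,
    hc.eventually_ge_atTop ((B₁/a₁)^2), hc.eventually_ge_atTop (2*(((u₂:ℝ)+1)*B₂+1)/b₁)]
    with n hn₁ hn₂ hm₁ hm₂ e1 e2 e3 e4
  obtain ⟨hf₁l, hf₁u⟩ := hN₁ n hn₁
  obtain ⟨hf₂l, hf₂u⟩ := hN₂ n hn₂
  obtain ⟨hg₁l, hg₁u⟩ := hM₁ n hm₁
  obtain ⟨hg₂l, hg₂u⟩ := hM₂ n hm₂
  set x : ℝ := (n:ℝ) with hxdef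
  have hx1 : (1:ℝ) ≤ x := e1
  have hx0 : (0:ℝ) < x := lt_of_lt_of_le one_pos hx1
  set s : ℝ := x ^ ((1:ℝ)/2) with hsdef
  have hs0 : (0:ℝ) ≤ s := Real.rpow_nonneg hx0.le _
  have hs1 : (1:ℝ) ≤ s := Real.one_le_rpow hx1 (by norm_num)
  have hs2 : s * s = x := by
    rw [hsdef, ← Real.rpow_add hx0]; norm_num
  -- g₁ n is positive
  have hg₁pos : (0:ℝ) < (g₁ n : ℝ) := by
    have : (0:ℝ) < b₁ * x ^ k₁ := by positivity
    linarith
  -- B₁ ≤ a₁ * s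
  have hBas : B₁ ≤ a₁ * s := by
    have h5 : B₁ / a₁ ≤ s := by
      have := Real.rpow_le_rpow (by positivity) e3 (by norm_num : (0:ℝ) ≤ 1/2)
      calc B₁ / a₁ = (((B₁/a₁)^2) ^ ((1:ℝ)/2)) := by
            rw [← Real.rpow_natCast (B₁/a₁) 2, ← Real.rpow_mul (by positivity)]
            norm_num
        _ ≤ s := this
    calc B₁ = a₁ * (B₁ / a₁) := by field_simp
      _ ≤ a₁ * s := by apply mul_le_mul_of_nonneg_left h5 ha₁.le
  -- s * g₁ n ≤ f₁ n
  have hfg : s * (g₁ n : ℝ) ≤ (f₁ n : ℝ) := by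
    have hk : x ^ (k₁+1) ≤ x ^ u₁ := pow_le_pow_right₀ hx1 h₁
    have hxx : s * (B₁ * x ^ k₁) ≤ a₁ * x ^ u₁ := by
      have step : s * B₁ ≤ a₁ * x := by
        calc s * B₁ ≤ s * (a₁ * s) := by
              apply mul_le_mul_of_nonneg_left hBas hs0
          _ = a₁ * (s * s) := by ring
          _ = a₁ * x := by rw [hs2]
      calc s * (B₁ * x ^ k₁) = (s * B₁) * x ^ k₁ := by ring
        _ ≤ (a₁ * x) * x ^ k₁ := by
            apply mul_le_mul_of_nonneg_right step (by positivity)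
        _ = a₁ * x ^ (k₁+1) := by ring
        _ ≤ a₁ * x ^ u₁ := by apply mul_le_mul_of_nonneg_left hk ha₁.le
    calc s * (g₁ n : ℝ) ≤ s * (B₁ * x ^ k₁) := by
          apply mul_le_mul_of_nonneg_left hg₁u hs0
      _ ≤ a₁ * x ^ u₁ := hxx
      _ ≤ (f₁ n : ℝ) := hf₁l
  have hle : g₁ n ≤ f₁ n := by
    have : (g₁ n : ℝ) ≤ (f₁ n : ℝ) := by
      calc (g₁ n : ℝ) = 1 * (g₁ n : ℝ) := by ring
        _ ≤ s * (g₁ n : ℝ) := mul_le_mul_of_nonneg_right hs1 hg₁pos.le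
        _ ≤ (f₁ n : ℝ) := hfg
    exact_mod_cast this
  set P : ℝ := b₁ * x ^ k₁ / 2 with hPdef
  -- denominator lower bound
  have hden : x ^ P ≤ ((f₁ n).choose (g₁ n) : ℝ) := by
    have hq : s ≤ (f₁ n : ℝ) / (g₁ n : ℝ) := (le_div_iff₀ hg₁pos).mpr hfg
    have h6 : s ^ (g₁ n) ≤ ((f₁ n : ℝ) / (g₁ n : ℝ)) ^ (g₁ n) :=
      pow_le_pow_left₀ hs0 hq _
    have h7 : s ^ (g₁ n) = x ^ ((1:ℝ)/2 * (g₁ n : ℝ)) := by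
      rw [hsdef, ← Real.rpow_natCast (x ^ ((1:ℝ)/2)) (g₁ n), ← Real.rpow_mul hx0.le]
    have h8 : x ^ P ≤ x ^ ((1:ℝ)/2 * (g₁ n : ℝ)) := by
      apply Real.rpow_le_rpow_of_exponent_le hx1
      rw [hPdef]; linarith
    calc x ^ P ≤ x ^ ((1:ℝ)/2 * (g₁ n : ℝ)) := h8
      _ = s ^ (g₁ n) := h7.symm
      _ ≤ ((f₁ n : ℝ) / (g₁ n : ℝ)) ^ (g₁ n) := h6
      _ ≤ ((f₁ n).choose (g₁ n) : ℝ) := div_pow_le_choose _ _ hle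
  -- numerator upper bound
  have hnum : ((f₂ n).choose (g₂ n) : ℝ) ≤ x ^ (P - 1) := by
    have hfx : (f₂ n : ℝ) ≤ x ^ (u₂ + 1) := by
      calc (f₂ n : ℝ) ≤ A₂ * x ^ u₂ := hf₂u
        _ ≤ x * x ^ u₂ := by apply mul_le_mul_of_nonneg_right e2 (by positivity)
        _ = x ^ (u₂ + 1) := by ring
    have h9 : ((f₂ n).choose (g₂ n) : ℝ) ≤ (f₂ n : ℝ) ^ (g₂ n) := by
      exact_mod_cast Nat.cast_le.mpr (Nat.choose_le_pow (f₂ n) (g₂ n))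
    have h10 : (f₂ n : ℝ) ^ (g₂ n) ≤ (x ^ (u₂+1)) ^ (g₂ n) :=
      pow_le_pow_left₀ (by positivity) hfx _
    have h11 : (x ^ (u₂+1)) ^ (g₂ n) = x ^ (((u₂+1) * g₂ n : ℕ) : ℝ) := by
      rw [← pow_mul, ← Real.rpow_natCast]
    have h12 : (((u₂+1) * g₂ n : ℕ) : ℝ) ≤ P - 1 := by
      have hk2 : (1:ℝ) ≤ x ^ k₂ := one_le_pow₀ hx1
      have hpw : x * x ^ k₂ ≤ x ^ k₁ := by
        calc x * x ^ k₂ = x ^ (k₂ + 1) := by ring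
          _ ≤ x ^ k₁ := pow_le_pow_right₀ hx1 h₃
      have e4' : 2*(((u₂:ℝ)+1)*B₂+1) ≤ b₁ * x := by
        rw [div_le_iff₀ hb₁] at e4; linarith
      have key : 2*(((u₂:ℝ)+1)*B₂+1) * x ^ k₂ ≤ (b₁ * x) * x ^ k₂ :=
        mul_le_mul_of_nonneg_right e4' (by positivity)
      have hbb : (b₁ * x) * x ^ k₂ ≤ b₁ * x ^ k₁ := by
        calc (b₁ * x) * x ^ k₂ = b₁ * (x * x ^ k₂) := by ring
          _ ≤ b₁ * x ^ k₁ := mul_le_mul_of_nonneg_left hpw hb₁.le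
      have hgg : (((u₂+1) * g₂ n : ℕ) : ℝ) = ((u₂:ℝ)+1) * (g₂ n : ℝ) := by push_cast; ring
      have hg2b : (g₂ n : ℝ) ≤ B₂ * x ^ k₂ := hg₂u
      rw [hgg, hPdef]
      have hu2 : (0:ℝ) ≤ (u₂:ℝ)+1 := by positivity
      have hmain := mul_le_mul_of_nonneg_left hg2b hu2
      linarith [key, hbb, hk2, hmain]
    calc ((f₂ n).choose (g₂ n) : ℝ) ≤ (f₂ n : ℝ) ^ (g₂ n) := h9
      _ ≤ (x ^ (u₂+1)) ^ (g₂ n) := h10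
      _ = x ^ (((u₂+1) * g₂ n : ℕ) : ℝ) := h11
      _ ≤ x ^ (P - 1) := Real.rpow_le_rpow_of_exponent_le hx1 h12
  have hdpos : (0:ℝ) < x ^ P := Real.rpow_pos_of_pos hx0 _
  calc ((f₂ n).choose (g₂ n) : ℝ) / ((f₁ n).choose (g₁ n) : ℝ)
      ≤ x ^ (P - 1) / x ^ P := by
        apply div_le_div₀ (by positivity) hnum hdpos hden
    _ = 1 / x := by
        rw [← Real.rpow_sub hx0, show P - 1 - P = -1 by ring, Real.rpow_neg_one, one_div]
end
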